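/- Let A ∈ ℝ^{N×N} be symmetric positive definite, let i₁ < … < i_m be indices and B = [e_{i₁},…,e_{i_m}] ∈ ℝ^{N×m}. Let Q ∈ ℝ^{N×s} have orthonormal columns with Qᵀ B = E₁ (the first m columns of the s×s identity) and suppose the column span of Q contains the columns of B and of A^{−1} B. Set Ã = Qᵀ A Q. Then Ã is positive definite and for all positive reals d₁,…,d_m and all j, ℓ ∈ {1,…,m}: (e_{i_j}/√d_j − e_{i_ℓ}/√d_ℓ)ᵀ A^{−1} (e_{i_j}/√d_j − e_{i_ℓ}/√d_ℓ) = (e_j/√d_j − e_ℓ/√d_ℓ)ᵀ Ã^{−1} (e_j/√d_j − e_ℓ/√d_ℓ). -/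

import Mathlib

open Matrix

lemma aux_quad {n k : ℕ} (X : Matrix (Fin n) (Fin k) ℝ) (M : Matrix (Fin n) (Fin n) ℝ)
    (x : Fin k → ℝ) :
    (X.mulVec x) ⬝ᵥ M.mulVec (X.mulVec x) = x ⬝ᵥ (Xᵀ * M * X).mulVec x := by
  rw [← mulVec_mulVec, ← mulVec_mulVec, dotProduct_mulVec x, vecMul_transpose]

lemma aux_B_single {N m : ℕ} (idx : Fin m → Fin N) (j : Fin m) (c : ℝ) :
    (Matrix.of fun a b => if a = idx b then (1 : ℝ) else 0).mulVec (Pi.single j c)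
      = Pi.single (idx j) c := by
  funext a
  simp [mulVec, dotProduct, Pi.single_apply]

lemma aux_E_single {m s : ℕ} (hms : m ≤ s) (j : Fin m) (c : ℝ) :
    (Matrix.of fun (a : Fin s) (b : Fin m) => if (a : ℕ) = (b : ℕ) then (1:ℝ) else 0).mulVec
      (Pi.single j c) = Pi.single (Fin.castLE hms j) c := by
  funext a
  simp [mulVec, dotProduct, Pi.single_apply, Fin.ext_iff]
  rw [Finset.sum_eq_single j]
  · simp
  · intro b _ hb; simp [Fin.ext_iff] at hb ⊢; intro h1 h2; omega
  · simp

theorem commute_time_distance_preservation {N m s : ℕ} (hms : m ≤ s)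
    (A : Matrix (Fin N) (Fin N) ℝ) (hA : A.PosDef)
    (idx : Fin m → Fin N) (hidx : StrictMono idx)
    (Q : Matrix (Fin N) (Fin s) ℝ) (hQ : Qᵀ * Q = 1)
    (hQB : Qᵀ * (Matrix.of fun a b => if a = idx b then (1 : ℝ) else 0) =
      Matrix.of fun (a : Fin s) (b : Fin m) => if (a : ℕ) = (b : ℕ) then 1 else 0)
    (hB : ∃ C : Matrix (Fin s) (Fin m) ℝ,
      (Matrix.of fun a b => if a = idx b then (1 : ℝ) else 0) = Q * C)
    (hAinvB : ∃ C : Matrix (Fin s) (Fin m) ℝ,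
      A⁻¹ * (Matrix.of fun a b => if a = idx b then (1 : ℝ) else 0) = Q * C) :
    (Qᵀ * A * Q).PosDef ∧
      ∀ d : Fin m → ℝ, (∀ b, 0 < d b) → ∀ j ℓ : Fin m,
        (Pi.single (idx j) ((Real.sqrt (d j))⁻¹) -
            Pi.single (idx ℓ) ((Real.sqrt (d ℓ))⁻¹)) ⬝ᵥ
          (A⁻¹).mulVec
            (Pi.single (idx j) ((Real.sqrt (d j))⁻¹) -
              Pi.single (idx ℓ) ((Real.sqrt (d ℓ))⁻¹)) =
        (Pi.single (Fin.castLE hms j) ((Real.sqrt (d j))⁻¹) -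
            Pi.single (Fin.castLE hms ℓ) ((Real.sqrt (d ℓ))⁻¹)) ⬝ᵥ
          ((Qᵀ * A * Q)⁻¹).mulVec
            (Pi.single (Fin.castLE hms j) ((Real.sqrt (d j))⁻¹) -
              Pi.single (Fin.castLE hms ℓ) ((Real.sqrt (d ℓ))⁻¹)) := by
  set B : Matrix (Fin N) (Fin m) ℝ :=
    Matrix.of fun a b => if a = idx b then (1 : ℝ) else 0 with hBdef
  set E : Matrix (Fin s) (Fin m) ℝ :=
    Matrix.of fun (a : Fin s) (b : Fin m) => if (a : ℕ) = (b : ℕ) then 1 else 0 with hEdef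
  -- Q has trivial kernel
  have hQker : ∀ x : Fin s → ℝ, Q.mulVec x = 0 → x = 0 := by
    intro x hx
    have : (Qᵀ * Q).mulVec x = 0 := by rw [← mulVec_mulVec, hx, mulVec_zero]
    rwa [hQ, one_mulVec] at this
  -- positive definiteness of Ã
  have hPD : (Qᵀ * A * Q).PosDef := by
    refine Matrix.PosDef.of_dotProduct_mulVec_pos ?_ ?_
    · have h := hA.isHermitian
      show (Qᵀ * A * Q)ᴴ = Qᵀ * A * Q
      rw [conjTranspose_mul, conjTranspose_mul, h.eq]
      simp [Matrix.mul_assoc]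
    · intro x hx
      have hQx : Q.mulVec x ≠ 0 := fun h => hx (hQker x h)
      have h2 := hA.dotProduct_mulVec_pos (x := Q.mulVec x) hQx
      rw [star_trivial, aux_quad Q A x] at h2
      rw [star_trivial]
      exact h2
  refine ⟨hPD, ?_⟩
  -- invertibility facts
  have hAdet : IsUnit A.det := isUnit_iff_ne_zero.mpr hA.det_pos.ne'
  have hTdet : IsUnit (Qᵀ * A * Q).det := isUnit_iff_ne_zero.mpr hPD.det_pos.ne'
  have hQQ : ∀ {k : Type} [Fintype k] (C : Matrix (Fin s) k ℝ), Qᵀ * (Q * C) = C := by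
    intro k _ C; rw [← Matrix.mul_assoc, hQ, Matrix.one_mul]
  obtain ⟨C, hC⟩ := hAinvB
  have key1 : (Qᵀ * A * Q) * (Qᵀ * (A⁻¹ * B)) = Qᵀ * B := by
    rw [hC, hQQ, Matrix.mul_assoc (Qᵀ * A) Q C, ← hC, Matrix.mul_assoc Qᵀ A (A⁻¹ * B),
      ← Matrix.mul_assoc A A⁻¹ B, Matrix.mul_nonsing_inv _ hAdet, Matrix.one_mul]
  have key2 : (Qᵀ * A * Q)⁻¹ * (Qᵀ * B) = Qᵀ * (A⁻¹ * B) := by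
    rw [← key1, ← Matrix.mul_assoc, Matrix.nonsing_inv_mul _ hTdet, Matrix.one_mul]
  obtain ⟨C', hC'⟩ := hB
  have keyM : Eᵀ * (Qᵀ * A * Q)⁻¹ * E = Bᵀ * A⁻¹ * B := by
    rw [← hQB, Matrix.mul_assoc, key2, transpose_mul, transpose_transpose, hC']
    simp only [transpose_mul, Matrix.mul_assoc, hQQ]
  intro d _ j ℓ
  set cj := (Real.sqrt (d j))⁻¹
  set cℓ := (Real.sqrt (d ℓ))⁻¹
  set x : Fin m → ℝ := Pi.single j cj - Pi.single ℓ cℓ with hx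
  have hBv : Pi.single (idx j) cj - Pi.single (idx ℓ) cℓ = B.mulVec x := by
    rw [hx, mulVec_sub, aux_B_single, aux_B_single]
  have hEv : Pi.single (Fin.castLE hms j) cj - Pi.single (Fin.castLE hms ℓ) cℓ
      = E.mulVec x := by
    rw [hx, mulVec_sub, aux_E_single, aux_E_single]
  rw [hBv, hEv, aux_quad, aux_quad, keyM]
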